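/- Let m ≥ 2, 0 < α < 1 and c ≥ 1. Assume that the Chebyshev segments S^CL_m = {[x_{i−1}^CL, x_i^CL] : i = 1, …, m}, where x_i^CL = −cos(iπ/m), are unisolvent for ℙ_{m−1} and satisfy Λ_m(S^CL_m) ≤ c (log m + π/2). Let n ∈ ℕ with n ≥ (c/α) m² (log m + π/2), and let x_0^MC < x_1^MC < … < x_m^MC be points of the equispaced grid X^eq_{n+1} with |x_i^MC − x_i^CL| ≤ 1/n for all i = 0, …, m. Then the concatenated mock-Chebyshev segments S^MC_m = {[x_{i−1}^MC, x_i^MC] : i = 1, …, m} are unisolvent for ℙ_{m−1} and Λ_m(S^MC_m) ≤ (c/(1 − α)) (log m + π/2). -/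

import Mathlib

open Real Set Polynomial

/-- Segmental average: `μ_[a,b](f) = (b-a)⁻¹ ∫_a^b f`. -/
noncomputable def segAvg (a b : ℝ) (f : ℝ → ℝ) : ℝ := (b - a)⁻¹ * ∫ x in a..b, f x

/-- Segmental Lebesgue constant associated with a (Lagrange) basis `L`:
`max_{x ∈ [-1,1]} ∑ i |L i (x)|`. -/
noncomputable def lebC (n : ℕ) (L : Fin n → Polynomial ℝ) : ℝ :=
  sSup ((fun x => ∑ i : Fin n, |(L i).eval x|) '' Set.Icc (-1 : ℝ) 1)

namespace Stmt9Aux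





lemma polyII (p : ℝ[X]) (a b : ℝ) :
    IntervalIntegrable (fun x => p.eval x) MeasureTheory.volume a b :=
  (p.continuous).intervalIntegrable a b

/-- The segmental-average linear map attached to nodes `w`. -/
noncomputable def avgMap (m : ℕ) (w : Fin (m + 1) → ℝ) :
    Polynomial.degreeLT ℝ m →ₗ[ℝ] (Fin m → ℝ) where
  toFun p := fun i => segAvg (w i.castSucc) (w i.succ) fun x => Polynomial.eval x (p : Polynomial ℝ)
  map_add' p q := by
    funext i
    simp only [segAvg, Submodule.coe_add, Polynomial.eval_add, Pi.add_apply]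
    rw [intervalIntegral.integral_add (polyII _ _ _) (polyII _ _ _)]
    ring
  map_smul' c p := by
    funext i
    simp only [segAvg, Submodule.coe_smul, Polynomial.eval_smul, RingHom.id_apply, Pi.smul_apply,
      smul_eq_mul]
    rw [intervalIntegral.integral_const_mul]
    ring

lemma avgMap_injective (m : ℕ) (w : Fin (m + 1) → ℝ) (hw : StrictMono w) :
    Function.Injective (avgMap m w) := by
  rw [← LinearMap.ker_eq_bot, Submodule.eq_bot_iff]
  intro p hp
  by_contra hne
  have hPne : (p : ℝ[X]) ≠ 0 := by
    simpa [ZeroMemClass.coe_eq_zero] using hne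
  set P : ℝ[X] := (p : ℝ[X]) with hPdef
  -- primitive
  set g : ℝ → ℝ := fun x => ∫ t in (w 0)..x, P.eval t with hgdef
  have hder : ∀ x : ℝ, HasDerivAt g (P.eval x) x := by
    intro x
    exact intervalIntegral.integral_hasDerivAt_right (polyII P _ _)
      (P.continuous.aestronglyMeasurable.stronglyMeasurableAtFilter)
      P.continuous.continuousAt
  have key : ∀ i : Fin m, ∃ ξ ∈ Ioo (w i.castSucc) (w i.succ), P.eval ξ = 0 := by
    intro i
    have hlt : w i.castSucc < w i.succ := hw (Fin.castSucc_lt_succ : i.castSucc < i.succ)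
    have h0 : segAvg (w i.castSucc) (w i.succ) (fun x => P.eval x) = 0 := congrFun hp i
    have hint0 : (∫ x in (w i.castSucc)..(w i.succ), P.eval x) = 0 := by
      have hne' : (w i.succ - w i.castSucc)⁻¹ ≠ 0 := by
        simp [sub_ne_zero.2 hlt.ne']
      simpa [segAvg, hne', mul_eq_zero] using h0
    have hgI : g (w i.castSucc) = g (w i.succ) := by
      have := intervalIntegral.integral_add_adjacent_intervals
        (polyII P (w 0) (w i.castSucc)) (polyII P (w i.castSucc) (w i.succ))
      simp only [hgdef]
      rw [← this, hint0, add_zero]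
    obtain ⟨ξ, hξ, hz⟩ := exists_hasDerivAt_eq_zero hlt
      (fun x _ => (hder x).continuousAt.continuousWithinAt) hgI
      (fun x _ => hder x)
    exact ⟨ξ, hξ, hz⟩
  choose ξ hξmem hξzero using key
  have hξlt : ∀ i j : Fin m, i < j → ξ i < ξ j := by
    intro i j hlt
    have h1 : ξ i < w i.succ := (hξmem i).2
    have h2 : w j.castSucc < ξ j := (hξmem j).1
    have h3 : w i.succ ≤ w j.castSucc := by
      apply hw.monotone
      rw [Fin.succ_le_castSucc_iff]
      exact hlt
    linarith
  have hξinj : Function.Injective ξ := by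
    intro i j hij
    rcases lt_trichotomy i j with h | h | h
    · exact absurd hij (hξlt i j h).ne
    · exact h
    · exact absurd hij.symm (hξlt j i h).ne
  have hcard : P.natDegree < (Finset.univ.image ξ).card := by
    rw [Finset.card_image_of_injective _ hξinj, Finset.card_univ, Fintype.card_fin]
    have hdeg : P.degree < (m : ℕ) := (Polynomial.mem_degreeLT).1 p.2
    exact (Polynomial.natDegree_lt_iff_degree_lt hPne).2 hdeg
  refine hPne (Polynomial.eq_zero_of_natDegree_lt_card_of_eval_eq_zero' P _ ?_ hcard)
  intro x hx
  obtain ⟨i, _, rfl⟩ := Finset.mem_image.1 hx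
  exact hξzero i

instance (m : ℕ) : FiniteDimensional ℝ (Polynomial.degreeLT ℝ m) :=
  Module.Finite.equiv (Polynomial.degreeLTEquiv ℝ m).symm

lemma avgMap_bijective (m : ℕ) (w : Fin (m + 1) → ℝ) (hw : StrictMono w) :
    Function.Bijective (avgMap m w) := by
  have hinj := avgMap_injective m w hw
  have hrk : Module.finrank ℝ (Polynomial.degreeLT ℝ m) = Module.finrank ℝ (Fin m → ℝ) := by
    rw [(Polynomial.degreeLTEquiv ℝ m).finrank_eq, Module.finrank_fin_fun]
  exact ⟨hinj, (LinearMap.injective_iff_surjective_of_finrank_eq_finrank hrk).1 hinj⟩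


/-- Boundary Chebyshev segment length lower bound. -/
lemma trig_boundary (m : ℕ) (hm : 2 ≤ m) : 3 / (m : ℝ) ^ 2 ≤ 1 - Real.cos (π / m) := by
  have hm' : (2 : ℝ) ≤ m := by exact_mod_cast hm
  have hmpos : (0 : ℝ) < m := by linarith
  set x : ℝ := π / (2 * m) with hx
  have hπ : (3.14 : ℝ) < π := pi_gt_d2
  have hπ' : π < 3.15 := pi_lt_d2
  have hxpos : 0 < x := by positivity
  have hxle : x ≤ 0.7875 := by
    rw [hx, div_le_iff₀ (by positivity)]
    nlinarith
  have hx1 : x ≤ 1 := by linarith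
  have hsin : x - x ^ 3 / 4 ≤ Real.sin x := by
    have h := Real.sin_gt_sub_cube hxpos; have h3 := pow_pos hxpos 3; linarith
  have hcos : 1 - Real.cos (π / m) = 2 * Real.sin x ^ 2 := by
    have h2x : 2 * x = π / m := by rw [hx]; field_simp
    rw [← h2x, Real.sin_sq_eq_half_sub]; ring
  rw [hcos]
  have hxval : x * m = π / 2 := by rw [hx]; field_simp
  have hxsq : x ^ 2 ≤ 0.7875 ^ 2 := by
    exact pow_le_pow_left₀ hxpos.le hxle 2
  have hsinpos : 0 ≤ x - x ^ 3 / 4 := by nlinarith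
  have hsq : (x - x ^ 3 / 4) ^ 2 ≤ Real.sin x ^ 2 := pow_le_pow_left₀ hsinpos hsin 2
  rw [div_le_iff₀ (by positivity)]
  have expand : 2 * (x - x ^ 3 / 4) ^ 2 * (m:ℝ) ^ 2 = 2 * (x * m) ^ 2 * (1 - x ^ 2 / 4) ^ 2 := by
    ring
  have h2 : (3:ℝ) ≤ 2 * (x - x ^ 3 / 4) ^ 2 * (m:ℝ) ^ 2 := by
    rw [expand, hxval]
    have hu : (0.84 : ℝ) ≤ 1 - x ^ 2 / 4 := by nlinarith
    have hu2 : (0.84 : ℝ) ^ 2 ≤ (1 - x ^ 2 / 4) ^ 2 := pow_le_pow_left₀ (by norm_num) hu 2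
    have hpi2 : (9.85 : ℝ) ≤ π ^ 2 := by nlinarith
    have hprod := mul_le_mul hpi2 hu2 (by norm_num) (by positivity)
    nlinarith [hprod]
  have h1 : 2 * (x - x ^ 3 / 4) ^ 2 * (m:ℝ) ^ 2 ≤ 2 * Real.sin x ^ 2 * (m:ℝ) ^ 2 := by
    have h := mul_le_mul_of_nonneg_right hsq (sq_nonneg (m : ℝ))
    linarith
  linarith

/-- Interior Chebyshev segment length lower bound. -/
lemma trig_interior (m : ℕ) (j : ℕ) (h1 : 1 ≤ j) (h2 : j + 2 ≤ m) :
    6 / (m : ℝ) ^ 2 ≤ Real.cos (j * π / m) - Real.cos ((j + 1) * π / m) := by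
  have hm3 : 3 ≤ m := by omega
  have hm' : (3 : ℝ) ≤ m := by exact_mod_cast hm3
  have hmpos : (0 : ℝ) < m := by linarith
  have hj1 : (1 : ℝ) ≤ j := by exact_mod_cast h1
  have hj2 : (j : ℝ) + 2 ≤ m := by exact_mod_cast h2
  have key : Real.cos (j * π / m) - Real.cos ((j + 1) * π / m)
      = 2 * Real.sin ((2 * j + 1) * π / (2 * m)) * Real.sin (π / (2 * m)) := by
    rw [Real.cos_sub_cos]
    have e1 : ((j : ℝ) * π / m + (j + 1) * π / m) / 2 = (2 * j + 1) * π / (2 * m) := by ring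
    have e2 : ((j : ℝ) * π / m - (j + 1) * π / m) / 2 = -(π / (2 * m)) := by ring
    rw [e1, e2, Real.sin_neg]; ring
  rw [key]
  have hs1 : 1 / (m : ℝ) ≤ Real.sin (π / (2 * m)) := by
    have h := Real.mul_le_sin (x := π / (2 * m)) (by positivity)
      (by rw [div_le_div_iff₀ (by positivity) (by norm_num)]; nlinarith [pi_pos])
    calc 1 / (m:ℝ) = 2 / π * (π / (2 * m)) := by field_simp
    _ ≤ _ := h
  have hs2 : 3 / (m : ℝ) ≤ Real.sin ((2 * j + 1) * π / (2 * m)) := by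
    set θ : ℝ := (2 * j + 1) * π / (2 * m) with hθ
    have hθ3 : 3 * π / (2 * m) ≤ θ := by
      rw [hθ, div_le_div_iff₀ (by positivity) (by positivity)]
      have h := mul_le_mul_of_nonneg_right (show (3:ℝ) ≤ 2 * j + 1 by linarith)
        (show (0:ℝ) ≤ π * (2 * m) by positivity)
      linarith
    have hθ3' : θ ≤ π - 3 * π / (2 * m) := by
      have hrw : π - 3 * π / (2 * m) = (2 * m - 3) * π / (2 * m) := by field_simp
      rw [hθ, hrw, div_le_div_iff₀ (by positivity) (by positivity)]
      have h := mul_le_mul_of_nonneg_right (show (2*(j:ℝ) + 1) ≤ 2 * m - 3 by linarith)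
        (show (0:ℝ) ≤ π * (2 * m) by positivity)
      linarith
    have hval : 2 / π * (3 * π / (2 * m)) = 3 / m := by field_simp
    rcases le_total θ (π / 2) with hle | hle
    · have h := Real.mul_le_sin (x := θ) (le_trans (by positivity) hθ3) hle
      calc 3 / (m:ℝ) = 2 / π * (3 * π / (2 * m)) := hval.symm
      _ ≤ 2 / π * θ := by
          apply mul_le_mul_of_nonneg_left hθ3 (by positivity)
      _ ≤ _ := h
    · have hsub : Real.sin θ = Real.sin (π - θ) := (Real.sin_pi_sub θ).symm
      rw [hsub]
      have hge : 3 * π / (2 * m) ≤ π - θ := by linarith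
      have h := Real.mul_le_sin (x := π - θ) (le_trans (by positivity) hge) (by linarith)
      calc 3 / (m:ℝ) = 2 / π * (3 * π / (2 * m)) := hval.symm
      _ ≤ 2 / π * (π - θ) := by
          apply mul_le_mul_of_nonneg_left hge (by positivity)
      _ ≤ _ := h
  have hθpos : (0:ℝ) ≤ Real.sin ((2 * j + 1) * π / (2 * m)) := le_trans (by positivity) hs2
  have := mul_le_mul hs2 hs1 (by positivity) hθpos
  calc 6 / (m:ℝ)^2 = 2 * (3 / m * (1 / m)) := by field_simp; ring
  _ ≤ 2 * (Real.sin ((2 * j + 1) * π / (2 * m)) * Real.sin (π / (2 * m))) := by linarith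
  _ = _ := by ring




lemma sum_abs_integral_le_of_le {m : ℕ} (L : Fin m → ℝ[X]) (Λ : ℝ)
    (hΛ : ∀ x ∈ Icc (-1:ℝ) 1, (∑ k, |(L k).eval x|) ≤ Λ)
    {w w' : ℝ} (hw : -1 ≤ w) (hw' : w' ≤ 1) (hle : w ≤ w') :
    (∑ k, |∫ x in w..w', (L k).eval x|) ≤ Λ * (w' - w) := by
  have hsub : Icc w w' ⊆ Icc (-1:ℝ) 1 := Icc_subset_Icc hw hw'
  calc ∑ k, |∫ x in w..w', (L k).eval x| ≤ ∑ k, ∫ x in w..w', |(L k).eval x| :=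
        Finset.sum_le_sum fun k _ => intervalIntegral.abs_integral_le_integral_abs hle
  _ = ∫ x in w..w', ∑ k, |(L k).eval x| := (intervalIntegral.integral_finset_sum (fun k _ =>
        ((L k).continuous.abs.intervalIntegrable _ _))).symm
  _ ≤ ∫ _x in w..w', Λ := by
      apply intervalIntegral.integral_mono_on hle
        ((continuous_finset_sum _ fun k _ => (L k).continuous.abs).intervalIntegrable _ _)
        intervalIntegrable_const
      intro x hx; exact hΛ x (hsub hx)
  _ = Λ * (w' - w) := by simp [mul_comm]

lemma sum_abs_integral_le {m : ℕ} (L : Fin m → ℝ[X]) (Λ : ℝ)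
    (hΛ : ∀ x ∈ Icc (-1:ℝ) 1, (∑ k, |(L k).eval x|) ≤ Λ)
    {w w' : ℝ} (hw : w ∈ Icc (-1:ℝ) 1) (hw' : w' ∈ Icc (-1:ℝ) 1) :
    (∑ k, |∫ x in w..w', (L k).eval x|) ≤ Λ * |w' - w| := by
  rcases le_total w w' with h | h
  · rw [abs_of_nonneg (by linarith)]
    exact sum_abs_integral_le_of_le L Λ hΛ hw.1 hw'.2 h
  · rw [abs_of_nonpos (by linarith)]
    have := sum_abs_integral_le_of_le L Λ hΛ hw'.1 hw.2 h
    calc ∑ k, |∫ x in w..w', (L k).eval x| = ∑ k, |∫ x in w'..w, (L k).eval x| := by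
          refine Finset.sum_congr rfl fun k _ => ?_
          rw [intervalIntegral.integral_symm, abs_neg]
    _ ≤ Λ * (w - w') := this
    _ = Λ * -(w' - w) := by ring


lemma sum_mul_ite {m : ℕ} (f : Fin m → ℝ) (j : Fin m) :
    (∑ kk : Fin m, f kk * (if kk = j then (1:ℝ) else 0)) = f j := by
  have h : ∀ kk : Fin m, f kk * (if kk = j then (1:ℝ) else 0)
      = if kk = j then f kk else 0 := by
    intro kk; split <;> simp
  simp only [h]
  rw [Finset.sum_ite_eq' Finset.univ j f]
  simp

lemma sum_abs_ite {m : ℕ} (j : Fin m) : (∑ i : Fin m, |if i = j then (1:ℝ) else 0|) = 1 := by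
  have h : ∀ i : Fin m, |if i = j then (1:ℝ) else 0| = if i = j then (1:ℝ) else 0 := by
    intro i; split <;> simp
  simp only [h]
  rw [Finset.sum_ite_eq' Finset.univ j fun _ => (1:ℝ)]
  simp

end Stmt9Aux

open Stmt9Aux in
set_option maxHeartbeats 2000000 in
/-- Logarithmic growth of the Lebesgue constant for the concatenated mock-Chebyshev
segments (Theorem 2). -/
theorem stmt_9 (m : ℕ) (hm : 2 ≤ m) (c a : ℝ) (ha0 : 0 < a) (ha1 : a < 1) (hc : 1 ≤ c)
    -- the Chebyshev segments `[x_{i-1}^CL, x_i^CL]`, `x_i^CL = -cos(iπ/m)`, are unisolvent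
    -- for `ℙ_{m-1}`, with Lagrange basis `LCL` and Lebesgue constant ≤ `c (log m + π/2)`
    (LCL : Fin m → Polynomial ℝ)
    (hCLdeg : ∀ i, LCL i ∈ Polynomial.degreeLT ℝ m)
    (hCLdelta : ∀ i j : Fin m,
      segAvg (-Real.cos ((j : ℝ) * π / m)) (-Real.cos (((j : ℝ) + 1) * π / m))
        (fun x => (LCL i).eval x) = if i = j then 1 else 0)
    (hLebCL : lebC m LCL ≤ c * (Real.log m + π / 2))
    (n : ℕ) (hn : c / a * (m : ℝ) ^ 2 * (Real.log m + π / 2) ≤ (n : ℝ))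
    -- mock-Chebyshev nodes: increasing points of the equispaced grid `X^eq_{n+1}`
    -- within `1/n` of the Chebyshev–Lobatto nodes
    (k : Fin (m + 1) → Fin (n + 1)) (xMC : Fin (m + 1) → ℝ)
    (hxMC : ∀ i, xMC i = -1 + 2 * (k i : ℝ) / n)
    (hmono : StrictMono xMC)
    (hclose : ∀ i : Fin (m + 1), |xMC i - (-Real.cos ((i : ℝ) * π / m))| ≤ 1 / n) :
    -- the concatenated mock-Chebyshev segments are unisolvent for `ℙ_{m-1}` …
    Function.Bijective (fun p : Polynomial.degreeLT ℝ m => fun i : Fin m =>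
      segAvg (xMC i.castSucc) (xMC i.succ) fun x => Polynomial.eval x (p : Polynomial ℝ)) ∧
    -- … and their Lebesgue constant is at most `c/(1-a) (log m + π/2)`
    ∀ LMC : Fin m → Polynomial ℝ,
      (∀ i, LMC i ∈ Polynomial.degreeLT ℝ m) →
      (∀ i j : Fin m, segAvg (xMC j.castSucc) (xMC j.succ) (fun x => (LMC i).eval x)
          = if i = j then 1 else 0) →
      lebC m LMC ≤ c / (1 - a) * (Real.log m + π / 2) := by
  classical
  have hm1R : (1 : ℝ) ≤ m := by exact_mod_cast (by omega : 1 ≤ m)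
  have hmpos : (0 : ℝ) < m := by linarith
  have hπ : (3.14 : ℝ) < π := Real.pi_gt_d2
  have hπ' : π < 3.15 := Real.pi_lt_d2
  set Lc : ℝ := Real.log m + π / 2 with hLdef
  have hlog0 : 0 ≤ Real.log m := Real.log_nonneg hm1R
  have hL1 : (3 / 2 : ℝ) ≤ Lc := by rw [hLdef]; linarith
  set Λb : ℝ := c * Lc with hΛdef
  have hΛ1 : (3 / 2 : ℝ) ≤ Λb := by
    rw [hΛdef]; nlinarith
  have hΛpos : (0 : ℝ) < Λb := by linarith
  have haΛ : a ≤ Λb := by linarith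
  have hnR : (0 : ℝ) < n := by
    refine lt_of_lt_of_le ?_ hn
    have h0 : 0 < c / a := by positivity
    positivity
  have hnkey : Λb * (m : ℝ) ^ 2 ≤ a * n := by
    have h := mul_le_mul_of_nonneg_left hn ha0.le
    have heq : a * (c / a * (m : ℝ) ^ 2 * Lc) = c * Lc * (m : ℝ) ^ 2 := by
      field_simp
    rw [heq] at h
    rw [hΛdef]; linarith
  set z : Fin (m + 1) → ℝ := fun i => -Real.cos ((i : ℝ) * π / m) with hzdef
  have hclose' : ∀ i, |xMC i - z i| ≤ 1 / n := by
    intro i; simp only [hzdef]; exact hclose i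
  have hzIcc : ∀ i, z i ∈ Icc (-1 : ℝ) 1 := by
    intro i
    constructor
    · have := Real.cos_le_one ((i : ℝ) * π / m); simp only [hzdef]; linarith
    · have := Real.neg_one_le_cos ((i : ℝ) * π / m); simp only [hzdef]; linarith
  have hzmono : StrictMono z := by
    intro i i' hlt
    have hi : (i : ℝ) < i' := by exact_mod_cast hlt
    have hi0 : (0 : ℝ) ≤ i := by positivity
    have hi'le : (i' : ℝ) ≤ m := by exact_mod_cast Fin.is_le i'
    have h1 : (i : ℝ) * π / m ∈ Icc 0 π :=
      ⟨by positivity, by rw [div_le_iff₀ hmpos]; nlinarith⟩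
    have h2 : (i' : ℝ) * π / m ∈ Icc 0 π :=
      ⟨by positivity, by rw [div_le_iff₀ hmpos]; nlinarith⟩
    have hcc := Real.strictAntiOn_cos h1 h2
      (by rw [div_lt_div_iff_of_pos_right hmpos]; nlinarith)
    simp only [hzdef]
    linarith
  have hz0 : z 0 = -1 := by
    simp only [hzdef, Fin.val_zero]
    norm_num
  have hzlast : z (Fin.last m) = 1 := by
    simp only [hzdef, Fin.val_last]
    rw [mul_comm, mul_div_assoc, div_self hmpos.ne', mul_one, Real.cos_pi]
    norm_num
  have hzc : ∀ j : Fin m, z j.castSucc = -Real.cos ((j : ℝ) * π / m) := by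
    intro j; simp only [hzdef, Fin.coe_castSucc]
  have hzs : ∀ j : Fin m, z j.succ = -Real.cos (((j : ℝ) + 1) * π / m) := by
    intro j; simp only [hzdef, Fin.val_succ]; push_cast; ring_nf
  have hkle : ∀ i, ((k i : ℕ) : ℝ) ≤ n := fun i => by exact_mod_cast Fin.is_le (k i)
  have hyIcc : ∀ i, xMC i ∈ Icc (-1 : ℝ) 1 := by
    intro i
    rw [hxMC i]
    constructor
    · have : 0 ≤ 2 * ((k i : ℕ) : ℝ) / n := by positivity
      linarith
    · have h2 : 2 * ((k i : ℕ) : ℝ) / n ≤ 2 := by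
        rw [div_le_iff₀ hnR]; nlinarith [hkle i]
      linarith
  -- the extreme mock nodes agree with the extreme Chebyshev--Lobatto nodes
  have hy0 : xMC 0 = -1 := by
    have h := hclose' 0
    rw [hz0, hxMC 0] at h
    have he : -1 + 2 * ((k 0 : ℕ) : ℝ) / n - -1 = 2 * ((k 0 : ℕ) : ℝ) / n := by ring
    rw [he] at h
    rw [abs_of_nonneg (by positivity)] at h
    have h2 : 2 * ((k 0 : ℕ) : ℝ) ≤ 1 := by
      have hh := mul_le_mul_of_nonneg_right h hnR.le
      rw [div_mul_cancel₀ _ hnR.ne', div_mul_cancel₀ _ hnR.ne'] at hh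
      exact hh
    have hk0 : (k 0 : ℕ) = 0 := by
      by_contra hne
      have h1 : 1 ≤ (k 0 : ℕ) := Nat.one_le_iff_ne_zero.2 hne
      have : (1 : ℝ) ≤ ((k 0 : ℕ) : ℝ) := by exact_mod_cast h1
      linarith
    rw [hxMC 0, hk0]
    norm_num
  have hylast : xMC (Fin.last m) = 1 := by
    have h := hclose' (Fin.last m)
    rw [hzlast, hxMC (Fin.last m)] at h
    have h1 := (abs_le.1 h).1
    have h2 : 2 - 1 / (n : ℝ) ≤ 2 * ((k (Fin.last m) : ℕ) : ℝ) / n := by linarith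
    have h3 := mul_le_mul_of_nonneg_right h2 hnR.le
    rw [sub_mul, div_mul_cancel₀ _ hnR.ne', div_mul_cancel₀ _ hnR.ne'] at h3
    have h4 : 2 * (n : ℕ) ≤ 2 * (k (Fin.last m) : ℕ) + 1 := by
      have hc4 : (2 * (n : ℕ) : ℝ) ≤ 2 * ((k (Fin.last m) : ℕ) : ℝ) + 1 := by
        push_cast; linarith
      exact_mod_cast hc4
    have h5 : (k (Fin.last m) : ℕ) ≤ n := Fin.is_le _
    have h6 : (k (Fin.last m) : ℕ) = n := by omega
    rw [hxMC (Fin.last m), h6, mul_div_assoc, div_self hnR.ne']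
    norm_num
  -- per-segment geometric bound
  have hDlen : ∀ j : Fin m, (2 * Λb + a) *
      (|xMC j.castSucc - z j.castSucc| + |xMC j.succ - z j.succ|)
      ≤ a * (z j.succ - z j.castSucc) := by
    intro j
    have hcoef : (0 : ℝ) ≤ 2 * Λb + a := by linarith
    have h3 : (2 * Λb + a) * (m : ℝ) ^ 2 ≤ 3 * (a * n) := by
      have hmul := mul_le_mul_of_nonneg_right haΛ (sq_nonneg (m : ℝ))
      nlinarith
    have habs : ∀ i, (0:ℝ) ≤ |xMC i - z i| := fun i => abs_nonneg _
    have hfin : ∀ q D len : ℝ, 0 < q → D ≤ q / n → 3 * q / (m : ℝ) ^ 2 ≤ len →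
        (2 * Λb + a) * D ≤ a * len := by
      intro q D len hq hDq hlen
      calc (2 * Λb + a) * D ≤ (2 * Λb + a) * (q / n) :=
            mul_le_mul_of_nonneg_left hDq hcoef
      _ ≤ a * (3 * q / (m : ℝ) ^ 2) := by
          have he1 : a * (3 * q / (m : ℝ) ^ 2) = 3 * q * a / (m : ℝ) ^ 2 := by ring
          have he2 : (2 * Λb + a) * (q / n) = (2 * Λb + a) * q / n := by ring
          rw [he1, he2, div_le_div_iff₀ hnR (by positivity)]
          nlinarith [mul_le_mul_of_nonneg_left h3 hq.le]
      _ ≤ a * len := mul_le_mul_of_nonneg_left hlen ha0.le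
    by_cases hj0 : (j : ℕ) = 0
    · have hcs : j.castSucc = 0 := by
        apply Fin.ext; simpa using hj0
      have hd1 : |xMC j.castSucc - z j.castSucc| = 0 := by
        rw [hcs, hy0, hz0]; simp
      have hlen : 3 * 1 / (m : ℝ) ^ 2 ≤ z j.succ - z j.castSucc := by
        rw [hcs, hz0, hzs j]
        have hjc : ((j : ℕ) : ℝ) = 0 := by rw [hj0]; norm_num
        rw [hjc, zero_add, one_mul]
        have := trig_boundary m hm
        linarith
      exact hfin 1 _ _ one_pos (by rw [hd1, zero_add]; simpa using hclose' j.succ) hlen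
    · by_cases hjm : (j : ℕ) = m - 1
      · have hsucc : j.succ = Fin.last m := by
          apply Fin.ext; simp [Fin.val_last, hjm]; omega
        have hd2 : |xMC j.succ - z j.succ| = 0 := by
          rw [hsucc, hylast, hzlast]; simp
        have hlen : 3 * 1 / (m : ℝ) ^ 2 ≤ z j.succ - z j.castSucc := by
          rw [hsucc, hzlast, hzc j]
          have hjc : ((j : ℕ) : ℝ) = (m : ℝ) - 1 := by
            rw [hjm]; push_cast [Nat.cast_sub (by omega : 1 ≤ m)]; ring
          rw [hjc]
          have harg : ((m : ℝ) - 1) * π / m = π - π / m := by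
            field_simp
          rw [harg, Real.cos_pi_sub]
          have := trig_boundary m hm
          linarith
        exact hfin 1 _ _ one_pos
          (by rw [hd2, add_zero]; simpa using hclose' j.castSucc) hlen
      · -- interior segment
        have hj1 : 1 ≤ (j : ℕ) := by omega
        have hj2 : (j : ℕ) + 2 ≤ m := by
          have := j.isLt; omega
        have hlen : 3 * 2 / (m : ℝ) ^ 2 ≤ z j.succ - z j.castSucc := by
          rw [hzc j, hzs j]
          have := trig_interior m (j : ℕ) hj1 hj2
          have he : (6 : ℝ) / (m : ℝ) ^ 2 = 3 * 2 / (m : ℝ) ^ 2 := by norm_num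
          rw [he] at this
          linarith
        refine hfin 2 _ _ two_pos ?_ hlen
        have ha1' := hclose' j.castSucc
        have ha2' := hclose' j.succ
        have : (2 : ℝ) / n = 1 / n + 1 / n := by ring
        rw [this]
        exact add_le_add ha1' ha2'
  -- Part 1: unisolvency
  refine ⟨avgMap_bijective m xMC hmono, ?_⟩
  intro LMC hMCdeg hMCdelta
  -- pointwise bound for the Chebyshev Lagrange basis
  have hcontsum : Continuous fun x : ℝ => ∑ kk : Fin m, |(LCL kk).eval x| :=
    continuous_finset_sum _ fun kk _ => (LCL kk).continuous.abs
  have hbdd : BddAbove ((fun x : ℝ => ∑ kk : Fin m, |(LCL kk).eval x|) '' Icc (-1 : ℝ) 1) :=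
    (isCompact_Icc.image hcontsum).bddAbove
  have hpt : ∀ x ∈ Icc (-1 : ℝ) 1, (∑ kk : Fin m, |(LCL kk).eval x|) ≤ Λb := by
    intro x hx
    refine le_trans (le_csSup hbdd ⟨x, hx, rfl⟩) ?_
    rw [hΛdef, hLdef]
    exact hLebCL
  -- the perturbation matrix bound
  set F : Fin m → Fin m → ℝ := fun kk j =>
    segAvg (xMC j.castSucc) (xMC j.succ) (fun x => (LCL kk).eval x) with hFdef
  have hE : ∀ j : Fin m,
      (∑ kk : Fin m, |F kk j - (if kk = j then (1:ℝ) else 0)|) ≤ a := by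
    intro j
    have hlz : 0 < z j.succ - z j.castSucc := sub_pos.2 (hzmono (Fin.castSucc_lt_succ : j.castSucc < j.succ))
    have hly : 0 < xMC j.succ - xMC j.castSucc := sub_pos.2 (hmono (Fin.castSucc_lt_succ : j.castSucc < j.succ))
    have hAvgZ : ∀ kk : Fin m,
        segAvg (z j.castSucc) (z j.succ) (fun x => (LCL kk).eval x)
          = if kk = j then 1 else 0 := by
      intro kk
      rw [hzc j, hzs j]
      exact hCLdelta kk j
    -- the three integral bounds
    have hIa : (∑ kk : Fin m, |∫ x in (xMC j.castSucc)..(z j.castSucc), (LCL kk).eval x|)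
        ≤ Λb * |xMC j.castSucc - z j.castSucc| := by
      have := sum_abs_integral_le LCL Λb hpt (hyIcc j.castSucc) (hzIcc j.castSucc)
      rwa [abs_sub_comm] at this
    have hIb : (∑ kk : Fin m, |∫ x in (z j.succ)..(xMC j.succ), (LCL kk).eval x|)
        ≤ Λb * |xMC j.succ - z j.succ| :=
      sum_abs_integral_le LCL Λb hpt (hzIcc j.succ) (hyIcc j.succ)
    have hI : (∑ kk : Fin m, |∫ x in (z j.castSucc)..(z j.succ), (LCL kk).eval x|)
        ≤ Λb * (z j.succ - z j.castSucc) := by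
      have := sum_abs_integral_le LCL Λb hpt (hzIcc j.castSucc) (hzIcc j.succ)
      rwa [abs_of_pos hlz] at this
    -- pointwise decomposition
    have hstep : ∀ kk : Fin m, |F kk j - (if kk = j then (1:ℝ) else 0)| ≤
        (xMC j.succ - xMC j.castSucc)⁻¹ *
          (|∫ x in (xMC j.castSucc)..(z j.castSucc), (LCL kk).eval x|
            + |∫ x in (z j.succ)..(xMC j.succ), (LCL kk).eval x|)
        + ((xMC j.succ - xMC j.castSucc)⁻¹ * (z j.succ - z j.castSucc)⁻¹ *
            |(z j.succ - z j.castSucc) - (xMC j.succ - xMC j.castSucc)|) *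
          |∫ x in (z j.castSucc)..(z j.succ), (LCL kk).eval x| := by
      intro kk
      rw [← hAvgZ kk]
      have hsplit : (∫ x in (xMC j.castSucc)..(xMC j.succ), (LCL kk).eval x)
          = (∫ x in (xMC j.castSucc)..(z j.castSucc), (LCL kk).eval x)
            + (∫ x in (z j.castSucc)..(z j.succ), (LCL kk).eval x)
            + (∫ x in (z j.succ)..(xMC j.succ), (LCL kk).eval x) := by
        have h1 := intervalIntegral.integral_add_adjacent_intervals
          (polyII (LCL kk) (xMC j.castSucc) (z j.castSucc))
          (polyII (LCL kk) (z j.castSucc) (z j.succ))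
        have h2 := intervalIntegral.integral_add_adjacent_intervals
          (polyII (LCL kk) (xMC j.castSucc) (z j.succ))
          (polyII (LCL kk) (z j.succ) (xMC j.succ))
        linarith
      have hexp : F kk j - segAvg (z j.castSucc) (z j.succ) (fun x => (LCL kk).eval x)
          = (xMC j.succ - xMC j.castSucc)⁻¹ *
              ((∫ x in (xMC j.castSucc)..(z j.castSucc), (LCL kk).eval x)
                + (∫ x in (z j.succ)..(xMC j.succ), (LCL kk).eval x))
            + ((xMC j.succ - xMC j.castSucc)⁻¹ - (z j.succ - z j.castSucc)⁻¹) *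
              (∫ x in (z j.castSucc)..(z j.succ), (LCL kk).eval x) := by
        rw [hFdef]
        simp only [segAvg]
        rw [hsplit]
        ring
      rw [hexp]
      have hinvd : (xMC j.succ - xMC j.castSucc)⁻¹ - (z j.succ - z j.castSucc)⁻¹
          = (xMC j.succ - xMC j.castSucc)⁻¹ * (z j.succ - z j.castSucc)⁻¹ *
            ((z j.succ - z j.castSucc) - (xMC j.succ - xMC j.castSucc)) := by
        field_simp
      calc |_| ≤ |(xMC j.succ - xMC j.castSucc)⁻¹ *
              ((∫ x in (xMC j.castSucc)..(z j.castSucc), (LCL kk).eval x)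
                + (∫ x in (z j.succ)..(xMC j.succ), (LCL kk).eval x))|
            + |((xMC j.succ - xMC j.castSucc)⁻¹ - (z j.succ - z j.castSucc)⁻¹) *
              (∫ x in (z j.castSucc)..(z j.succ), (LCL kk).eval x)| := abs_add_le _ _
      _ ≤ _ := by
          rw [hinvd]
          rw [abs_mul, abs_mul, abs_mul, abs_mul]
          rw [abs_of_nonneg (inv_nonneg.2 hly.le), abs_of_nonneg (inv_nonneg.2 hlz.le)]
          gcongr
          exact abs_add_le _ _
    -- summing up
    have hKey := hDlen j
    calc (∑ kk : Fin m, |F kk j - (if kk = j then (1:ℝ) else 0)|)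
        ≤ ∑ kk : Fin m, ((xMC j.succ - xMC j.castSucc)⁻¹ *
          (|∫ x in (xMC j.castSucc)..(z j.castSucc), (LCL kk).eval x|
            + |∫ x in (z j.succ)..(xMC j.succ), (LCL kk).eval x|)
        + ((xMC j.succ - xMC j.castSucc)⁻¹ * (z j.succ - z j.castSucc)⁻¹ *
            |(z j.succ - z j.castSucc) - (xMC j.succ - xMC j.castSucc)|) *
          |∫ x in (z j.castSucc)..(z j.succ), (LCL kk).eval x|) :=
          Finset.sum_le_sum fun kk _ => hstep kk
    _ = (xMC j.succ - xMC j.castSucc)⁻¹ *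
          ((∑ kk : Fin m, |∫ x in (xMC j.castSucc)..(z j.castSucc), (LCL kk).eval x|)
            + (∑ kk : Fin m, |∫ x in (z j.succ)..(xMC j.succ), (LCL kk).eval x|))
        + ((xMC j.succ - xMC j.castSucc)⁻¹ * (z j.succ - z j.castSucc)⁻¹ *
            |(z j.succ - z j.castSucc) - (xMC j.succ - xMC j.castSucc)|) *
          (∑ kk : Fin m, |∫ x in (z j.castSucc)..(z j.succ), (LCL kk).eval x|) := by
        rw [Finset.sum_add_distrib, ← Finset.mul_sum, ← Finset.mul_sum, Finset.sum_add_distrib]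
    _ ≤ (xMC j.succ - xMC j.castSucc)⁻¹ *
          (Λb * |xMC j.castSucc - z j.castSucc| + Λb * |xMC j.succ - z j.succ|)
        + ((xMC j.succ - xMC j.castSucc)⁻¹ * (z j.succ - z j.castSucc)⁻¹ *
            |(z j.succ - z j.castSucc) - (xMC j.succ - xMC j.castSucc)|) *
          (Λb * (z j.succ - z j.castSucc)) := by
        apply add_le_add
        · exact mul_le_mul_of_nonneg_left (add_le_add hIa hIb) (inv_nonneg.2 hly.le)
        · exact mul_le_mul_of_nonneg_left hI (by positivity)
    _ = (xMC j.succ - xMC j.castSucc)⁻¹ *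
          (Λb * (|xMC j.castSucc - z j.castSucc| + |xMC j.succ - z j.succ|
            + |(z j.succ - z j.castSucc) - (xMC j.succ - xMC j.castSucc)|)) := by
        field_simp
    _ ≤ (xMC j.succ - xMC j.castSucc)⁻¹ * (a * (xMC j.succ - xMC j.castSucc)) := by
        apply mul_le_mul_of_nonneg_left _ (inv_nonneg.2 hly.le)
        -- |Δlen| ≤ d + d', and the geometric bound
        have htri : |(z j.succ - z j.castSucc) - (xMC j.succ - xMC j.castSucc)|
            ≤ |xMC j.castSucc - z j.castSucc| + |xMC j.succ - z j.succ| := by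
          have he : (z j.succ - z j.castSucc) - (xMC j.succ - xMC j.castSucc)
              = (xMC j.castSucc - z j.castSucc) - (xMC j.succ - z j.succ) := by ring
          rw [he]
          exact abs_sub _ _
        have hlower : z j.succ - z j.castSucc
            - (|xMC j.castSucc - z j.castSucc| + |xMC j.succ - z j.succ|)
            ≤ xMC j.succ - xMC j.castSucc := by
          have h1 : xMC j.castSucc - z j.castSucc ≤ |xMC j.castSucc - z j.castSucc| :=
            le_abs_self _
          have h2 : -(xMC j.succ - z j.succ) ≤ |xMC j.succ - z j.succ| :=
            neg_le_abs _
          linarith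
        nlinarith [hDlen j, abs_nonneg ((z j.succ - z j.castSucc) - (xMC j.succ - xMC j.castSucc)),
          abs_nonneg (xMC j.castSucc - z j.castSucc), abs_nonneg (xMC j.succ - z j.succ)]
    _ = a := by
        rw [mul_comm a (xMC j.succ - xMC j.castSucc), ← mul_assoc,
          inv_mul_cancel₀ hly.ne', one_mul]
  -- expansion of the mock basis in the Chebyshev basis
  set Bmat : Fin m → Fin m → ℝ := fun i kk =>
    segAvg (z kk.castSucc) (z kk.succ) (fun x => (LMC i).eval x) with hBdef
  have hexp : ∀ i : Fin m, LMC i = ∑ kk : Fin m, Bmat i kk • LCL kk := by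
    intro i
    have hinj := (avgMap_bijective m z hzmono).injective
    have happ : avgMap m z ⟨LMC i, hMCdeg i⟩
        = avgMap m z (∑ kk : Fin m, Bmat i kk • ⟨LCL kk, hCLdeg kk⟩) := by
      rw [map_sum]
      funext j'
      simp only [map_smul, Finset.sum_apply, Pi.smul_apply, smul_eq_mul]
      have hterm : ∀ kk : Fin m, (avgMap m z ⟨LCL kk, hCLdeg kk⟩) j'
          = if kk = j' then (1:ℝ) else 0 := by
        intro kk
        show segAvg (z j'.castSucc) (z j'.succ) (fun x => (LCL kk).eval x)
          = if kk = j' then (1:ℝ) else 0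
        rw [hzc j', hzs j']
        exact hCLdelta kk j'
      calc (avgMap m z ⟨LMC i, hMCdeg i⟩) j' = Bmat i j' := rfl
      _ = ∑ kk : Fin m, Bmat i kk * (if kk = j' then (1:ℝ) else 0) := by
          rw [sum_mul_ite (fun kk => Bmat i kk) j']
      _ = _ := by
          refine Finset.sum_congr rfl fun kk _ => ?_
          rw [hterm kk]
    have := hinj happ
    have hcoe := congrArg (Subtype.val) this
    simpa using hcoe
  have heval : ∀ (i : Fin m) (x : ℝ),
      (LMC i).eval x = ∑ kk : Fin m, Bmat i kk * (LCL kk).eval x := by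
    intro i x
    conv_lhs => rw [hexp i]
    rw [Polynomial.eval_finset_sum]
    refine Finset.sum_congr rfl fun kk _ => ?_
    rw [Polynomial.eval_smul, smul_eq_mul]
  -- the linear relation between the matrices
  have hrel : ∀ i j : Fin m,
      (if i = j then (1:ℝ) else 0) = ∑ kk : Fin m, Bmat i kk * F kk j := by
    intro i j
    rw [← hMCdelta i j]
    have hint : (∫ x in (xMC j.castSucc)..(xMC j.succ), (LMC i).eval x)
        = ∑ kk : Fin m, Bmat i kk * ∫ x in (xMC j.castSucc)..(xMC j.succ), (LCL kk).eval x := by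
      rw [intervalIntegral.integral_congr (g := fun x => ∑ kk : Fin m, Bmat i kk * (LCL kk).eval x)
        (fun x _ => heval i x)]
      rw [intervalIntegral.integral_finset_sum
        (f := fun (kk : Fin m) (x : ℝ) => Bmat i kk * (LCL kk).eval x)
        (fun kk _ => ((continuous_const.mul (LCL kk).continuous).intervalIntegrable _ _))]
      exact Finset.sum_congr rfl fun kk _ => intervalIntegral.integral_const_mul _ _
    simp only [segAvg, hFdef]
    rw [hint, Finset.mul_sum]
    exact Finset.sum_congr rfl fun kk _ => by ring
  -- column sums of Bmat are bounded by 1/(1-a)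
  set S : Fin m → ℝ := fun kk => ∑ i : Fin m, |Bmat i kk| with hSdef
  obtain ⟨k₀, -, hk₀⟩ := Finset.exists_max_image Finset.univ S
    ⟨⟨0, by omega⟩, Finset.mem_univ _⟩
  have hS0 : 0 ≤ S k₀ := Finset.sum_nonneg fun i _ => abs_nonneg _
  have hBrec : ∀ i j : Fin m, Bmat i j = (if i = j then (1:ℝ) else 0)
      - ∑ kk : Fin m, Bmat i kk * (F kk j - (if kk = j then (1:ℝ) else 0)) := by
    intro i j
    have h1 : ∑ kk : Fin m, Bmat i kk * (F kk j - (if kk = j then (1:ℝ) else 0))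
        = (∑ kk : Fin m, Bmat i kk * F kk j)
          - ∑ kk : Fin m, Bmat i kk * (if kk = j then (1:ℝ) else 0) := by
      rw [← Finset.sum_sub_distrib]
      exact Finset.sum_congr rfl fun kk _ => by ring
    rw [h1, ← hrel i j, sum_mul_ite (fun kk => Bmat i kk) j]
    ring
  have hSk₀ : S k₀ ≤ 1 + a * S k₀ := by
    calc S k₀ = ∑ i : Fin m, |Bmat i k₀| := rfl
    _ ≤ ∑ i : Fin m, (|if i = k₀ then (1:ℝ) else 0|
        + ∑ kk : Fin m, |Bmat i kk| * |F kk k₀ - (if kk = k₀ then (1:ℝ) else 0)|) := by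
        refine Finset.sum_le_sum fun i _ => ?_
        rw [hBrec i k₀]
        refine le_trans (abs_sub _ _) ?_
        gcongr
        refine le_trans (Finset.abs_sum_le_sum_abs _ _) ?_
        refine Finset.sum_le_sum fun kk _ => ?_
        rw [abs_mul]
    _ = (∑ i : Fin m, |if i = k₀ then (1:ℝ) else 0|)
        + ∑ kk : Fin m, S kk * |F kk k₀ - (if kk = k₀ then (1:ℝ) else 0)| := by
        rw [Finset.sum_add_distrib]
        congr 1
        rw [Finset.sum_comm]
        refine Finset.sum_congr rfl fun kk _ => ?_
        rw [hSdef, Finset.sum_mul]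
    _ ≤ 1 + ∑ kk : Fin m, S k₀ * |F kk k₀ - (if kk = k₀ then (1:ℝ) else 0)| := by
        apply add_le_add (le_of_eq (sum_abs_ite k₀))
        exact Finset.sum_le_sum fun kk _ =>
          mul_le_mul_of_nonneg_right (hk₀ kk (Finset.mem_univ kk)) (abs_nonneg _)
    _ = 1 + S k₀ * ∑ kk : Fin m, |F kk k₀ - (if kk = k₀ then (1:ℝ) else 0)| := by
        rw [Finset.mul_sum]
    _ ≤ 1 + S k₀ * a := by
        gcongr
        exact hE k₀
    _ = 1 + a * S k₀ := by ring
  have hSbound : S k₀ ≤ 1 / (1 - a) := by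
    rw [le_div_iff₀ (by linarith : (0:ℝ) < 1 - a)]
    nlinarith
  -- conclusion: pointwise bound for the mock basis, then sup
  have hfinal : ∀ x ∈ Icc (-1:ℝ) 1,
      (∑ i : Fin m, |(LMC i).eval x|) ≤ c / (1 - a) * Lc := by
    intro x hx
    calc ∑ i : Fin m, |(LMC i).eval x|
        = ∑ i : Fin m, |∑ kk : Fin m, Bmat i kk * (LCL kk).eval x| := by
          refine Finset.sum_congr rfl fun i _ => ?_
          rw [heval i x]
    _ ≤ ∑ i : Fin m, ∑ kk : Fin m, |Bmat i kk| * |(LCL kk).eval x| := by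
          refine Finset.sum_le_sum fun i _ => ?_
          refine le_trans (Finset.abs_sum_le_sum_abs _ _) ?_
          refine Finset.sum_le_sum fun kk _ => ?_
          rw [abs_mul]
    _ = ∑ kk : Fin m, S kk * |(LCL kk).eval x| := by
          rw [Finset.sum_comm]
          refine Finset.sum_congr rfl fun kk _ => ?_
          rw [hSdef, Finset.sum_mul]
    _ ≤ ∑ kk : Fin m, S k₀ * |(LCL kk).eval x| := by
          refine Finset.sum_le_sum fun kk _ => ?_
          exact mul_le_mul_of_nonneg_right (hk₀ kk (Finset.mem_univ kk)) (abs_nonneg _)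
    _ = S k₀ * ∑ kk : Fin m, |(LCL kk).eval x| := by rw [Finset.mul_sum]
    _ ≤ (1 / (1 - a)) * Λb := by
          apply mul_le_mul hSbound (hpt x hx) (Finset.sum_nonneg fun kk _ => abs_nonneg _)
          exact div_nonneg (by norm_num) (by linarith)
    _ = c / (1 - a) * Lc := by
          rw [hΛdef]; ring
  -- wrap up via csSup
  have hne : ((fun x : ℝ => ∑ i : Fin m, |(LMC i).eval x|) '' Icc (-1 : ℝ) 1).Nonempty :=
    ⟨_, ⟨0, by norm_num, rfl⟩⟩
  rw [hLdef] at hfinal ⊢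
  refine csSup_le hne ?_
  rintro b ⟨x, hx, rfl⟩
  exact hfinal x hx
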